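/- Let U be a family of u intervals over {1,…,n}, let l_1 ≤ … ≤ l_u be its left endpoints sorted in non-decreasing order and r_1 ≤ … ≤ r_u its right endpoints sorted in non-decreasing order, and let U* = {[l_j, r_j] : j = 1,…,u} be the canonical form of U. Then for every point i ∈ {1,…,n}, the coverage of i by U* equals the coverage of i by U, i.e., c_{U*}(i) = c_U(i). -/

import Mathlib

/-- The coverage of a point `i` by a family `X` of intervals (pairs `(l, r)` identified
with `{l,…,r}`): the number of intervals in `X`, with multiplicity, containing `i`. -/
def coverage (X : Multiset (ℕ × ℕ)) (i : ℕ) : ℕ :=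
  (X.filter fun p => p.1 ≤ i ∧ i ≤ p.2).card

/-- The canonical form `U*` of a family `U` of intervals: pair the `j`-th smallest left
endpoint with the `j`-th smallest right endpoint, for `j = 1,…,|U|`. -/
def canonical (U : Multiset (ℕ × ℕ)) : Multiset (ℕ × ℕ) :=
  ((Multiset.sort (U.map Prod.fst) (· ≤ ·)).zip
    (Multiset.sort (U.map Prod.snd) (· ≤ ·)) : List (ℕ × ℕ))

-- sorted pointwise comparison lemma
lemma sorted_pointwise (L R : List ℕ) (hL : L.Pairwise (· ≤ ·)) (hR : R.Pairwise (· ≤ ·))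
    (hlen : L.length = R.length)
    (hcount : ∀ t, R.countP (fun x => decide (x < t)) ≤ L.countP (fun x => decide (x < t))) :
    ∀ j (hj : j < L.length), L[j] ≤ R[j]'(hlen ▸ hj) := by
  intro j hj
  by_contra h
  push_neg at h
  set t := L[j] with ht
  -- countP (< t) L ≤ j
  have h1 : L.countP (fun x => decide (x < t)) ≤ j := by
    have : L.countP (fun x => decide (x < t)) =
        (L.take j).countP (fun x => decide (x < t)) +
        (L.drop j).countP (fun x => decide (x < t)) := by
      rw [← List.countP_append, List.take_append_drop]
    rw [this]
    have h2 : (L.drop j).countP (fun x => decide (x < t)) = 0 := by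
      rw [List.countP_eq_zero]
      intro a ha
      obtain ⟨m, hm, rfl⟩ := List.mem_iff_getElem.mp ha
      have hm' : j + m < L.length := by rw [List.length_drop] at hm; omega
      rw [List.getElem_drop]
      simp only [decide_eq_true_eq, not_lt]
      have := hL.rel_get_of_le (a := ⟨j, hj⟩) (b := ⟨j + m, hm'⟩) (by simp)
      simpa using this
    rw [h2, Nat.add_zero]
    calc (L.take j).countP _ ≤ (L.take j).length := List.countP_le_length
      _ ≤ j := by simp
  -- countP (< t) R ≥ j+1
  have h3 : j + 1 ≤ R.countP (fun x => decide (x < t)) := by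
    have hjR : j < R.length := hlen ▸ hj
    have : (R.take (j+1)).countP (fun x => decide (x < t)) = (R.take (j+1)).length := by
      rw [List.countP_eq_length]
      intro a ha
      obtain ⟨m, hm, rfl⟩ := List.mem_iff_getElem.mp ha
      simp only [List.getElem_take, decide_eq_true_eq]
      have hm' : m < j + 1 := by simpa using hm.trans_le (List.length_take_le _ _)
      have := hR.rel_get_of_le (a := ⟨m, by omega⟩) (b := ⟨j, hjR⟩) (by simp; omega)
      simp only [List.get_eq_getElem] at this
      omega
    have hlen' : (R.take (j+1)).length = j + 1 := by simp; omega
    calc j + 1 = (R.take (j+1)).countP (fun x => decide (x < t)) := by rw [this, hlen']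
      _ ≤ R.countP (fun x => decide (x < t)) := (List.take_prefix _ _).countP_le
  have := hcount t
  omega

lemma canonical_le (U : Multiset (ℕ × ℕ)) (hU : ∀ p ∈ U, p.1 ≤ p.2) :
    ∀ p ∈ canonical U, p.1 ≤ p.2 := by
  intro p hp
  set L := Multiset.sort (U.map Prod.fst) (· ≤ ·) with hLdef
  set R := Multiset.sort (U.map Prod.snd) (· ≤ ·) with hRdef
  have hlen : L.length = R.length := by
    rw [hLdef, hRdef]
    simp [Multiset.length_sort]
  have hp' : p ∈ L.zip R := by simpa [canonical] using hp
  obtain ⟨j, hj, rfl⟩ := List.mem_iff_getElem.mp hp'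
  rw [List.getElem_zip]
  have hjL : j < L.length := by simp at hj; omega
  apply sorted_pointwise L R (Multiset.pairwise_sort _ _) (Multiset.pairwise_sort _ _) hlen _ j hjL
  intro t
  have e1 : L.countP (fun x => decide (x < t)) = Multiset.countP (· < t) (U.map Prod.fst) := by
    rw [hLdef]
    rw [show Multiset.countP (· < t) (U.map Prod.fst)
      = Multiset.countP (· < t) (↑(Multiset.sort (U.map Prod.fst) (· ≤ ·)) : Multiset ℕ) by
        rw [Multiset.sort_eq]]
    rfl
  have e2 : R.countP (fun x => decide (x < t)) = Multiset.countP (· < t) (U.map Prod.snd) := by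
    rw [hRdef]
    rw [show Multiset.countP (· < t) (U.map Prod.snd)
      = Multiset.countP (· < t) (↑(Multiset.sort (U.map Prod.snd) (· ≤ ·)) : Multiset ℕ) by
        rw [Multiset.sort_eq]]
    rfl
  rw [e1, e2, Multiset.countP_map, Multiset.countP_map]
  rw [← Multiset.countP_eq_card_filter, ← Multiset.countP_eq_card_filter]
  have heq : Multiset.countP (fun a => a.2 < t) U
      = Multiset.countP (fun a => a.2 < t ∧ a.1 < t) U := by
    refine Multiset.countP_congr rfl ?_
    intro p hp
    simp only [eq_iff_iff]
    constructor
    · intro h; exact ⟨h, lt_of_le_of_lt (hU p hp) h⟩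
    · exact And.left
  rw [heq]
  have : Multiset.filter (fun a => a.2 < t ∧ a.1 < t) U ≤ Multiset.filter (fun a => a.1 < t) U := by
    rw [show (Multiset.filter (fun a => a.2 < t ∧ a.1 < t) U)
        = Multiset.filter (fun a => a.2 < t) (Multiset.filter (fun a => a.1 < t) U) by
      rw [Multiset.filter_filter]]
    exact Multiset.filter_le _ _
  simpa [Multiset.countP_eq_card_filter] using Multiset.card_le_card this

lemma cover_key (i : ℕ) (X : Multiset (ℕ × ℕ)) (hX : ∀ p ∈ X, p.1 ≤ p.2) :
    coverage X i + Multiset.card X =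
      X.countP (fun p => p.1 ≤ i) + X.countP (fun p => i ≤ p.2) := by
  revert hX
  induction X using Multiset.induction with
  | empty => simp [coverage]
  | cons p X ih =>
    intro hX
    have hp : p.1 ≤ p.2 := hX p (Multiset.mem_cons_self _ _)
    have := ih (fun q hq => hX q (Multiset.mem_cons_of_mem hq))
    by_cases h1 : p.1 ≤ i <;> by_cases h2 : i ≤ p.2 <;>
      simp [coverage, Multiset.filter_cons, Multiset.countP_cons, h1, h2] at this ⊢ <;> omega

lemma map_fst_canonical (U : Multiset (ℕ × ℕ)) :
    (canonical U).map Prod.fst = U.map Prod.fst := by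
  have hlen : (Multiset.sort (U.map Prod.fst) (· ≤ ·)).length
      = (Multiset.sort (U.map Prod.snd) (· ≤ ·)).length := by
    simp [Multiset.length_sort]
  rw [canonical, Multiset.map_coe, List.map_fst_zip (le_of_eq hlen), Multiset.sort_eq]

lemma map_snd_canonical (U : Multiset (ℕ × ℕ)) :
    (canonical U).map Prod.snd = U.map Prod.snd := by
  have hlen : (Multiset.sort (U.map Prod.snd) (· ≤ ·)).length
      = (Multiset.sort (U.map Prod.fst) (· ≤ ·)).length := by
    simp [Multiset.length_sort]
  rw [canonical, Multiset.map_coe, List.map_snd_zip (le_of_eq hlen), Multiset.sort_eq]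

/-- For every family `U` of intervals over `{1,…,n}` and every point
`i ∈ {1,…,n}`, the coverage of `i` by the canonical form `U*` equals the coverage of
`i` by `U`. -/
theorem stmt_4 (n : ℕ) (U : Multiset (ℕ × ℕ))
    (hU : ∀ p ∈ U, 1 ≤ p.1 ∧ p.1 ≤ p.2 ∧ p.2 ≤ n) :
    ∀ i ∈ Finset.Icc 1 n, coverage (canonical U) i = coverage U i := by
  intro i _
  have h1 := cover_key i U (fun p hp => (hU p hp).2.1)
  have h2 := cover_key i (canonical U) (canonical_le U (fun p hp => (hU p hp).2.1))
  have hcard : Multiset.card (canonical U) = Multiset.card U := by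
    have := congrArg Multiset.card (map_fst_canonical U)
    simpa using this
  have hA : (canonical U).countP (fun p => p.1 ≤ i) = U.countP (fun p => p.1 ≤ i) := by
    have := congrArg (Multiset.countP (fun x => x ≤ i)) (map_fst_canonical U)
    rwa [Multiset.countP_map, Multiset.countP_map,
      ← Multiset.countP_eq_card_filter, ← Multiset.countP_eq_card_filter] at this
  have hB : (canonical U).countP (fun p => i ≤ p.2) = U.countP (fun p => i ≤ p.2) := by
    have := congrArg (Multiset.countP (fun x => i ≤ x)) (map_snd_canonical U)
    rwa [Multiset.countP_map, Multiset.countP_map,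
      ← Multiset.countP_eq_card_filter, ← Multiset.countP_eq_card_filter] at this
  omega
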